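/- The set A generated under the additive action of Z_151 by the single 3×5 base block with rows (0,1,2,3,4), (5,13,59,105,118), (28,67,73,112,134) forms a splitting 2-(151, 3×5, 1) design on Z_151: every pair of distinct elements of Z_151 occurs in two distinct rows of exactly one translate of the base block. -/
import Mathlib


/-- A `k × c` block with entries in `X`: each point of `X` occurs at most once
in the array (i.e. the array of entries is injective). -/
def IsBlock {X : Type*} (k c : ℕ) (B : Fin k → Fin c → X) : Prop :=
  Function.Injective fun p : Fin k × Fin c => B p.1 p.2

/-- The points of `T` occur in pairwise distinct rows of the block `B`. -/
def OccursInDistinctRows {X : Type*} {k c : ℕ} (B : Fin k → Fin c → X)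
    (T : Finset X) : Prop :=
  ∃ f : X → Fin k, Set.InjOn f ↑T ∧ ∀ x ∈ T, ∃ j : Fin c, B (f x) j = x

/-- A splitting `t`-`(v, k × c, λ)` design on point set `X`, with blocks indexed by `ι`:
every `t`-subset of points occurs in `t` pairwise distinct rows of exactly `lam` blocks. -/
structure IsSplittingDesign {X ι : Type*} [Fintype X] [Fintype ι]
    (t v k c lam : ℕ) (B : ι → Fin k → Fin c → X) : Prop where
  card_points : Fintype.card X = v
  block : ∀ i, IsBlock k c (B i)
  balance : ∀ T : Finset X, T.card = t →
    Nat.card {i : ι // OccursInDistinctRows (B i) T} = lam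

/-- Existence of a splitting `t`-`(v, k × c, lam)` design. -/
def SplittingDesignExists (t v k c lam : ℕ) : Prop :=
  ∃ (ι : Type) (_ : Fintype ι) (B : ι → Fin k → Fin c → Fin v),
    IsSplittingDesign t v k c lam B

/-- The `3 × 5` base block over `ℤ/151ℤ` with rows `(0,1,2,3,4)`,
`(5,13,59,105,118)`, `(28,67,73,112,134)`. -/
def baseBlock151 : Fin 3 → Fin 5 → ZMod 151 :=
  ![![0, 1, 2, 3, 4], ![5, 13, 59, 105, 118], ![28, 67, 73, 112, 134]]

set_option maxRecDepth 100000
set_option maxHeartbeats 4000000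

namespace Split151

def LN : List ℕ := [146, 138, 92, 46, 33, 147, 139, 93, 47, 34, 148, 140, 94, 48, 35, 149, 141, 95, 49, 36, 150, 142, 96, 50, 37, 123, 84, 78, 39, 17, 124, 85, 79, 40, 18, 125, 86, 80, 41, 19, 126, 87, 81, 42, 20, 127, 88, 82, 43, 21, 5, 4, 3, 2, 1, 13, 12, 11, 10, 9, 59, 58, 57, 56, 55, 105, 104, 103, 102, 101, 118, 117, 116, 115, 114, 128, 89, 83, 44, 22, 136, 97, 91, 52, 30, 31, 143, 137, 98, 76, 77, 38, 32, 144, 122, 90, 51, 45, 6, 135, 28, 27, 26, 25, 24, 67, 66, 65, 64, 63, 73, 72, 71, 70, 69, 112, 111, 110, 109, 108, 134, 133, 132, 131, 130, 23, 15, 120, 74, 61, 62, 54, 8, 113, 100, 68, 60, 14, 119, 106, 107, 99, 53, 7, 145, 129, 121, 75, 29, 16]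

def LZ : List (ZMod 151) := LN.map (fun n => (n : ZMod 151))

lemma hlenN : LN.length = 150 := rfl
lemma hlen : LZ.length = 150 := rfl

lemma hNodupN : LN.Nodup := by decide
lemma hlt : ∀ n ∈ LN, n < 151 := by decide
lemma hpos : ∀ n ∈ LN, 0 < n := by decide

lemma hNodup : LZ.Nodup := by
  refine hNodupN.map_on ?_
  intro x hx y hy h
  have hx' := ZMod.val_cast_of_lt (hlt x hx)
  have hy' := ZMod.val_cast_of_lt (hlt y hy)
  rw [← hx', ← hy', h]

lemma hne0 : ∀ d ∈ LZ, d ≠ 0 := by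
  intro d hd h
  obtain ⟨n, hn, hcast⟩ :=
    List.mem_map.mp (show d ∈ LN.map (fun n : ℕ => (n : ZMod 151)) from hd)
  have hv := ZMod.val_cast_of_lt (hlt n hn)
  rw [hcast, h, ZMod.val_zero] at hv
  exact (hpos n hn).ne' hv.symm

def ra : Fin 6 → Fin 3 := ![0,0,1,1,2,2]
def rb : Fin 6 → Fin 3 := ![1,2,0,2,0,1]

lemma ra_ne_rb : ∀ i, ra i ≠ rb i := by decide
lemma rows_exists : ∀ r r' : Fin 3, r ≠ r' → ∃ i, ra i = r ∧ rb i = r' := by decide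

def enc (p : Fin 6 × Fin 5 × Fin 5) : Fin 150 :=
  ⟨p.1.1 * 25 + p.2.1.1 * 5 + p.2.2.1, by omega⟩

lemma enc_inj : Function.Injective enc := by
  rintro ⟨a, b, c⟩ ⟨a', b', c'⟩ h
  simp only [enc, Fin.mk.injEq] at h
  have ha := a.isLt; have hb := b.isLt; have hc := c.isLt
  have ha' := a'.isLt; have hb' := b'.isLt; have hc' := c'.isLt
  have : a.1 = a'.1 ∧ b.1 = b'.1 ∧ c.1 = c'.1 := by omega
  simp [Prod.ext_iff, Fin.ext_iff, this.1, this.2.1, this.2.2]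

def F (p : Fin 6 × Fin 5 × Fin 5) : ZMod 151 :=
  baseBlock151 (ra p.1) p.2.1 - baseBlock151 (rb p.1) p.2.2

lemma hF : ∀ p, F p = LZ.get (Fin.cast hlen.symm (enc p)) := by decide

lemma F_inj : Function.Injective F := by
  have h1 : Function.Injective LZ.get := List.nodup_iff_injective_get.mp hNodup
  have : F = LZ.get ∘ (Fin.cast hlen.symm) ∘ enc := funext hF
  rw [this]
  exact h1.comp ((Fin.cast_injective _).comp enc_inj)

lemma F_surj : ∀ d : ZMod 151, d ≠ 0 → ∃ p, F p = d := by
  intro d hd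
  have hsub : LZ.toFinset ⊆ Finset.univ.erase 0 := by
    intro z hz
    exact Finset.mem_erase.mpr ⟨hne0 z (List.mem_toFinset.mp hz), Finset.mem_univ z⟩
  have hcard1 : LZ.toFinset.card = 150 := by
    rw [List.toFinset_card_of_nodup hNodup, hlen]
  have hcard2 : (Finset.univ.erase (0 : ZMod 151)).card = 150 := by
    rw [Finset.card_erase_of_mem (Finset.mem_univ _), Finset.card_univ, ZMod.card]
  have heq : LZ.toFinset = Finset.univ.erase 0 :=
    Finset.eq_of_subset_of_card_le hsub (by omega)
  have hdmem : d ∈ LZ.toFinset := heq ▸ Finset.mem_erase.mpr ⟨hd, Finset.mem_univ d⟩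
  obtain ⟨i, hi⟩ := List.mem_iff_get.mp (List.mem_toFinset.mp hdmem)
  have hencsurj : Function.Surjective enc := by
    have := (Fintype.bijective_iff_injective_and_card enc).mpr ⟨enc_inj, by simp⟩
    exact this.2
  obtain ⟨p, hp⟩ := hencsurj (Fin.cast hlen i)
  exact ⟨p, by rw [hF p, hp]; simpa using hi⟩

end Split151

namespace Split151

lemma base_inj : Function.Injective (fun p : Fin 3 × Fin 5 => baseBlock151 p.1 p.2) := by
  decide

lemma diff_exists_unique (d : ZMod 151) (hd : d ≠ 0) :
    ∃! q : (Fin 3 × Fin 5) × (Fin 3 × Fin 5), q.1.1 ≠ q.2.1 ∧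
      baseBlock151 q.1.1 q.1.2 - baseBlock151 q.2.1 q.2.2 = d := by
  obtain ⟨⟨i, j, k⟩, hp⟩ := F_surj d hd
  refine ⟨((ra i, j), (rb i, k)), ⟨ra_ne_rb i, hp⟩, ?_⟩
  rintro ⟨⟨r1, j1⟩, ⟨r2, j2⟩⟩ ⟨hr, hdq⟩
  obtain ⟨i', hi'1, hi'2⟩ := rows_exists r1 r2 hr
  have hF' : F (i', j1, j2) = d := by
    simp only [F, hi'1, hi'2]; exact hdq
  have := F_inj (hF'.trans hp.symm)
  simp only [Prod.mk.injEq] at this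
  obtain ⟨hii, hjj, hkk⟩ := this
  subst hii hjj hkk
  simp [hi'1, hi'2]

end Split151

lemma Split151.injOn_pair {x y : ZMod 151} {r1 r2 : Fin 3} (hxy : x ≠ y) (hr : r1 ≠ r2) :
    Set.InjOn (fun z => if z = x then r1 else r2) ↑({x, y} : Finset (ZMod 151)) := by
  intro p hp q hq hpq
  simp only [Finset.coe_insert, Set.mem_insert_iff, Finset.coe_singleton,
    Set.mem_singleton_iff] at hp hq
  have hpq' : (if p = x then r1 else r2) = (if q = x then r1 else r2) := hpq
  rcases hp with hp | hp <;> rcases hq with hq | hq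
  · rw [hp, hq]
  · exfalso
    rw [hp, hq, if_pos rfl, if_neg (Ne.symm hxy)] at hpq'
    exact hr hpq'
  · exfalso
    rw [hp, hq, if_neg (Ne.symm hxy), if_pos rfl] at hpq'
    exact hr hpq'.symm
  · rw [hp, hq]

/-- The 151 translates of the base block under the additive action of `ℤ/151ℤ`
form a splitting `2`-`(151, 3 × 5, 1)` design on `ℤ/151ℤ`. -/
theorem baseBlock151_generates_splitting_design :
    IsSplittingDesign 2 151 3 5 1
      (fun g : ZMod 151 => fun r j => baseBlock151 r j + g) := by
  refine ⟨ZMod.card 151, ?_, ?_⟩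
  · intro g p p' h
    simp only at h
    exact Split151.base_inj (add_right_cancel h)
  · intro T hT
    obtain ⟨x, y, hxy, rfl⟩ := Finset.card_eq_two.mp hT
    have hd : x - y ≠ 0 := sub_ne_zero.mpr hxy
    obtain ⟨q0, ⟨hq0r, hq0d⟩, huniq⟩ := Split151.diff_exists_unique _ hd
    have hiff : ∀ g : ZMod 151,
        OccursInDistinctRows (fun r j => baseBlock151 r j + g) {x, y} ↔
          g = x - baseBlock151 q0.1.1 q0.1.2 := by
      intro g
      constructor
      · rintro ⟨f, hinj, hcov⟩
        have hx : x ∈ ({x, y} : Finset (ZMod 151)) := by simp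
        have hy : y ∈ ({x, y} : Finset (ZMod 151)) := by simp
        obtain ⟨jx, hjx⟩ := hcov x hx
        obtain ⟨jy, hjy⟩ := hcov y hy
        simp only at hjx hjy
        have hr : f x ≠ f y := fun h => hxy (hinj (by simp) (by simp) h)
        have hq : ((f x, jx), (f y, jy)) = q0 := by
          apply huniq
          refine ⟨hr, ?_⟩
          have h1 : baseBlock151 (f x) jx = x - g := eq_sub_of_add_eq hjx
          have h2 : baseBlock151 (f y) jy = y - g := eq_sub_of_add_eq hjy
          simp only [h1, h2]; ring
        have hbb : baseBlock151 q0.1.1 q0.1.2 = baseBlock151 (f x) jx := by rw [← hq]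
        rw [hbb]
        exact eq_sub_of_add_eq' hjx
      · rintro rfl
        refine ⟨fun z => if z = x then q0.1.1 else q0.2.1,
          Split151.injOn_pair hxy hq0r, ?_⟩
        intro z hz
        rcases Finset.mem_insert.mp hz with hzx | hz'
        · refine ⟨q0.1.2, ?_⟩
          rw [hzx]
          show baseBlock151 (if x = x then q0.1.1 else q0.2.1) q0.1.2 +
            (x - baseBlock151 q0.1.1 q0.1.2) = x
          rw [if_pos rfl]
          ring
        · have hzy : z = y := Finset.mem_singleton.mp hz'
          refine ⟨q0.2.2, ?_⟩
          rw [hzy]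
          show baseBlock151 (if y = x then q0.1.1 else q0.2.1) q0.2.2 +
            (x - baseBlock151 q0.1.1 q0.1.2) = y
          rw [if_neg (Ne.symm hxy)]
          have hbb : baseBlock151 q0.2.1 q0.2.2 =
              baseBlock151 q0.1.1 q0.1.2 - (x - y) := by
            rw [← hq0d]; ring
          rw [hbb]; ring
    rw [Nat.card_eq_one_iff_unique]
    constructor
    · constructor
      rintro ⟨a, ha⟩ ⟨b, hb⟩
      exact Subtype.ext (((hiff a).mp ha).trans ((hiff b).mp hb).symm)
    · exact ⟨⟨x - baseBlock151 q0.1.1 q0.1.2, (hiff _).mpr rfl⟩⟩
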